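/- Let α, β ∈ ℂ with |α|²+|β|²=1. Then the point [ᾱ²+β̄² : √2(ᾱβ−αβ̄) : α²+β²] ∈ ℙ(ℂ³) equals [1:0:1] if and only if α and β are both real or both purely imaginary (i.e. Im α = Im β = 0, or Re α = Re β = 0). (This computes the stabilizer of [1:0:1] for the SU(2)-action, a subgroup whose identity component is a circle.) -/

import Mathlib

open Complex

/-- The vector `(X - iY, √2 i Z, X + iY)` in `ℂ³`. -/
noncomputable def sphereVec (X Y Z : ℝ) : Fin 3 → ℂ :=
  ![(X : ℂ) - Complex.I * Y, (Real.sqrt 2 : ℂ) * Complex.I * Z, (X : ℂ) + Complex.I * Y]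

lemma sphereVec_ne_zero {X Y Z : ℝ} (h : X ^ 2 + Y ^ 2 + Z ^ 2 = 1) :
    sphereVec X Y Z ≠ 0 := by
  intro h0
  have h0' : (X : ℂ) - Complex.I * Y = 0 := congrFun h0 0
  have h2' : (X : ℂ) + Complex.I * Y = 0 := congrFun h0 2
  have h1' : (Real.sqrt 2 : ℂ) * Complex.I * Z = 0 := congrFun h0 1
  have hX : X = 0 := by
    have := congrArg Complex.re (by linear_combination h0' + h2' : (2 : ℂ) * X = 0)
    simpa using this
  have hY : Y = 0 := by
    have := congrArg Complex.im (by linear_combination h2' - h0' : (2 : ℂ) * Complex.I * Y = 0)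
    simpa using this
  have hZ : Z = 0 := by
    rcases mul_eq_zero.mp h1' with h' | h'
    · rcases mul_eq_zero.mp h' with h'' | h''
      · exact absurd h'' (by simp [Complex.ext_iff, Real.sqrt_eq_zero'])
      · exact absurd h'' Complex.I_ne_zero
    · exact_mod_cast h'
  rw [hX, hY, hZ] at h
  norm_num at h

/-- The Chiang-type lagrangian `𝓛₂ ⊆ ℙ(ℂ³)`, in its real description. -/
noncomputable def ChiangL2 : Set (Projectivization ℂ (Fin 3 → ℂ)) :=
  {P | ∃ (X Y Z : ℝ) (h : X ^ 2 + Y ^ 2 + Z ^ 2 = 1),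
    P = Projectivization.mk ℂ (sphereVec X Y Z) (sphereVec_ne_zero h)}

/-- The point of the `SU(2)`-orbit description corresponding to `(α, β)`. -/
noncomputable def orbitVec (α β : ℂ) : Fin 3 → ℂ :=
  ![(starRingEnd ℂ α) ^ 2 + (starRingEnd ℂ β) ^ 2,
    (Real.sqrt 2 : ℂ) * ((starRingEnd ℂ α) * β - α * (starRingEnd ℂ β)),
    α ^ 2 + β ^ 2]

lemma key_identity (α β : ℂ) :
    ‖α ^ 2 + β ^ 2‖ ^ 2 + 4 * ((starRingEnd ℂ α * β).im) ^ 2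
      = (‖α‖ ^ 2 + ‖β‖ ^ 2) ^ 2 := by
  rw [Complex.sq_norm, Complex.sq_norm, Complex.sq_norm]
  simp only [Complex.normSq_apply, Complex.add_re, Complex.add_im, Complex.mul_re,
    Complex.mul_im, Complex.conj_re, Complex.conj_im, pow_two]
  ring

lemma orbitVec_ne_zero {α β : ℂ} (h : ‖α‖ ^ 2 + ‖β‖ ^ 2 = 1) :
    orbitVec α β ≠ 0 := by
  intro h0
  have h2' : α ^ 2 + β ^ 2 = 0 := congrFun h0 2
  have h1' : (Real.sqrt 2 : ℂ) * ((starRingEnd ℂ α) * β - α * (starRingEnd ℂ β)) = 0 :=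
    congrFun h0 1
  have hs : ((starRingEnd ℂ α) * β - α * (starRingEnd ℂ β)) = 0 := by
    rcases mul_eq_zero.mp h1' with h' | h'
    · exact absurd h' (by simp [Complex.ext_iff])
    · exact h'
  have him : (starRingEnd ℂ α * β).im = 0 := by
    have : α * (starRingEnd ℂ β) = starRingEnd ℂ (starRingEnd ℂ α * β) := by
      simp [mul_comm]
    rw [this, sub_eq_zero] at hs
    have h3 := congrArg Complex.im hs
    simp only [Complex.conj_im] at h3
    linarith
  have := key_identity α β
  rw [h2', him, h] at this
  norm_num at this

/-- The point `[ᾱ² + β̄² : √2(ᾱβ - αβ̄) : α² + β²]` equals `[1 : 0 : 1]` if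
and only if `α` and `β` are both real or both purely imaginary: this computes the stabilizer
of `[1 : 0 : 1]` for the `SU(2)`-action. -/
theorem stmt_4 (α β : ℂ) (h : ‖α‖ ^ 2 + ‖β‖ ^ 2 = 1) :
    Projectivization.mk ℂ (orbitVec α β) (orbitVec_ne_zero h) =
        Projectivization.mk ℂ ![(1 : ℂ), 0, 1]
          (by intro h0; simpa using congrFun h0 0) ↔
      ((α.im = 0 ∧ β.im = 0) ∨ (α.re = 0 ∧ β.re = 0)) := by
  have hr : α.re ^ 2 + α.im ^ 2 + β.re ^ 2 + β.im ^ 2 = 1 := by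
    have h' := h
    rw [Complex.sq_norm, Complex.sq_norm, Complex.normSq_apply, Complex.normSq_apply] at h'
    nlinarith [h']
  rw [Projectivization.mk_eq_mk_iff]
  constructor
  · rintro ⟨u, hu⟩
    have h0 := congrFun hu 0
    have h1 := congrFun hu 1
    have h2 := congrFun hu 2
    simp only [orbitVec, Pi.smul_apply, Matrix.cons_val_zero, Matrix.cons_val_one,
      Matrix.head_cons, Matrix.cons_val_two, Matrix.tail_cons, Units.smul_def,
      smul_eq_mul, mul_one, mul_zero] at h0 h1 h2
    have hx : (starRingEnd ℂ α) * β - α * (starRingEnd ℂ β) = 0 := by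
      have hs2 : ((Real.sqrt 2 : ℝ) : ℂ) ≠ 0 :=
        Complex.ofReal_ne_zero.mpr (Real.sqrt_pos.mpr (by norm_num)).ne'
      rcases mul_eq_zero.mp h1.symm with h' | h'
      · exact absurd h' hs2
      · exact h'
    have heq : (starRingEnd ℂ α) ^ 2 + (starRingEnd ℂ β) ^ 2 = α ^ 2 + β ^ 2 := by
      rw [← h0, ← h2]
    have e1 : α.re * α.im + β.re * β.im = 0 := by
      have := congrArg Complex.im heq
      simp only [Complex.add_im, pow_two, Complex.mul_im, Complex.conj_re,
        Complex.conj_im] at this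
      nlinarith [this]
    have e2 : α.re * β.im - α.im * β.re = 0 := by
      have := congrArg Complex.im hx
      simp only [Complex.sub_im, Complex.mul_im, Complex.conj_re, Complex.conj_im,
        Complex.zero_im] at this
      nlinarith [this]
    have key : (α.re ^ 2 + β.re ^ 2) * (α.im ^ 2 + β.im ^ 2) = 0 := by nlinarith [e1, e2]
    rcases mul_eq_zero.mp key with hk | hk
    · right
      constructor <;> nlinarith [sq_nonneg α.re, sq_nonneg β.re]
    · left
      constructor <;> nlinarith [sq_nonneg α.im, sq_nonneg β.im]
  · rintro (⟨ha, hb⟩ | ⟨ha, hb⟩)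
    · have hca : starRingEnd ℂ α = α := Complex.conj_eq_iff_im.mpr ha
      have hcb : starRingEnd ℂ β = β := Complex.conj_eq_iff_im.mpr hb
      have hone : α ^ 2 + β ^ 2 = 1 := by
        rw [Complex.ext_iff]
        constructor
        · simp only [Complex.add_re, pow_two, Complex.mul_re, Complex.one_re, ha, hb]
          nlinarith [hr]
        · simp [pow_two, Complex.mul_im, ha, hb]
      refine ⟨1, ?_⟩
      funext i
      fin_cases i <;>
        simp [orbitVec, hca, hcb, hone]
    · have hca : starRingEnd ℂ α = -α := by
        rw [Complex.ext_iff]; simp [ha]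
      have hcb : starRingEnd ℂ β = -β := by
        rw [Complex.ext_iff]; simp [hb]
      have hone : α ^ 2 + β ^ 2 = -1 := by
        rw [Complex.ext_iff]
        constructor
        · simp only [Complex.add_re, pow_two, Complex.mul_re, Complex.neg_re,
            Complex.one_re, ha, hb]
          nlinarith [hr]
        · simp [pow_two, Complex.mul_im, ha, hb]
      refine ⟨-1, ?_⟩
      funext i
      fin_cases i <;>
        simp [orbitVec, hca, hcb, hone]
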